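/- Let L be a first-order language, M an L-structure, φ(x̄; ȳ) an L-formula with free variables split into two finite blocks, b̄ a tuple of elements of M matching ȳ, and C ⊆ M. Then φ(x̄; b̄) divides over C if and only if there exist k < ω and a k-inconsistency witness ψ(ȳ₀, …, ȳ_{k−1}) for φ(x̄; ȳ) such that φ(x̄; b̄) (φ,ψ)-divides over C. -/

import Mathlib

open FirstOrder

universe u

/-- `b'` realizes `tp(b/C)` in `M`: `b` and `b'` satisfy the same formulas
with parameters from `C`. -/
def RealizesTp (L : FirstOrder.Language.{u, u}) {M : Type u} [L.Structure M]
    {m : ℕ} (C : Set M) (b b' : Fin m → M) : Prop :=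
  ∀ (t : ℕ) (θ : L.Formula (Fin m ⊕ Fin t)) (c : Fin t → M), (∀ i, c i ∈ C) →
    (θ.Realize (Sum.elim b c) ↔ θ.Realize (Sum.elim b' c))

/-- `ψ(ȳ₀,…,ȳ_{k−1})` is a `k`-inconsistency witness for `φ(x̄;ȳ)` with respect to `M`. -/
def IsIncWitness {L : FirstOrder.Language.{u, u}} (M : Type u) [L.Structure M]
    {n m k : ℕ} (φ : L.Formula (Fin n ⊕ Fin m)) (ψ : L.Formula (Fin k × Fin m)) : Prop :=
  ¬ ∃ (a : Fin n → M) (b : Fin k → Fin m → M),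
      (∀ i : Fin k, φ.Realize (Sum.elim a (b i))) ∧ ψ.Realize (fun p => b p.1 p.2)

/-- `φ(x̄;b̄)` `(φ,ψ)`-divides over `C`. -/
def PhiPsiDivides {L : FirstOrder.Language.{u, u}} {M : Type u} [L.Structure M]
    {n m k : ℕ} (φ : L.Formula (Fin n ⊕ Fin m)) (ψ : L.Formula (Fin k × Fin m))
    (b : Fin m → M) (C : Set M) : Prop :=
  ∃ bs : ℕ → Fin m → M, (∀ i, RealizesTp L C b (bs i)) ∧
    ∀ f : Fin k → ℕ, StrictMono f → ψ.Realize (fun p => bs (f p.1) p.2)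

/-- `φ(x̄;b̄)` divides over `C`: there are `k < ω` and a sequence of tuples, each realizing
`tp(b̄/C)`, such that any `k` of them (taken along a strictly increasing selection of
indices) are simultaneously unsatisfiable. -/
def FormulaDivides {L : FirstOrder.Language.{u, u}} {M : Type u} [L.Structure M]
    {n m : ℕ} (φ : L.Formula (Fin n ⊕ Fin m)) (b : Fin m → M) (C : Set M) : Prop :=
  ∃ (k : ℕ) (bs : ℕ → Fin m → M), (∀ i, RealizesTp L C b (bs i)) ∧
    ∀ f : Fin k → ℕ, StrictMono f →
      ¬ ∃ a : Fin n → M, ∀ j : Fin k, φ.Realize (Sum.elim a (bs (f j)))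

/-- The formula `¬ ∃ x̄, ⋀ i < k, φ(x̄; ȳᵢ)` in variables `Fin k × Fin m`. -/
noncomputable def witnessFormula {L : FirstOrder.Language.{u, u}}
    {n m : ℕ} (φ : L.Formula (Fin n ⊕ Fin m)) (k : ℕ) : L.Formula (Fin k × Fin m) :=
  Language.Formula.not <| Language.Formula.iExs (Fin n) <|
    Language.BoundedFormula.iInf
      (fun i : Fin k => φ.relabel (Sum.elim Sum.inr (fun j => Sum.inl (i, j))))

theorem realize_witnessFormula {L : FirstOrder.Language.{u, u}} {M : Type u} [L.Structure M]
    {n m : ℕ} (φ : L.Formula (Fin n ⊕ Fin m)) (k : ℕ) (v : Fin k × Fin m → M) :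
    (witnessFormula φ k).Realize v ↔
      ¬ ∃ a : Fin n → M, ∀ i : Fin k, φ.Realize (Sum.elim a (fun j => v (i, j))) := by
  rw [witnessFormula, Language.Formula.realize_not, Language.Formula.realize_iExs]
  apply not_congr
  refine exists_congr fun a => ?_
  rw [Language.Formula.Realize, Language.BoundedFormula.realize_iInf]
  refine forall_congr' fun i => ?_
  show (φ.relabel _).Realize (Sum.elim v a) ↔ _
  rw [Language.Formula.realize_relabel]
  apply iff_of_eq; congr 1
  funext x; cases x <;> rfl

/-- Exercise: dividing via inconsistency witnesses: `φ(x̄;b̄)` divides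
over `C` iff there are `k < ω` and a `k`-inconsistency witness `ψ` for `φ` such that
`φ(x̄;b̄)` `(φ,ψ)`-divides over `C`. -/
theorem stmt_17 {L : FirstOrder.Language.{u, u}} {M : Type u} [L.Structure M]
    {n m : ℕ} (φ : L.Formula (Fin n ⊕ Fin m)) (b : Fin m → M) (C : Set M) :
    FormulaDivides φ b C ↔
    ∃ (k : ℕ) (ψ : L.Formula (Fin k × Fin m)),
      IsIncWitness M φ ψ ∧ PhiPsiDivides φ ψ b C := by
  constructor
  · rintro ⟨k, bs, hbs, hk⟩
    refine ⟨k, witnessFormula φ k, ?_, bs, hbs, ?_⟩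
    · rintro ⟨a, bb, hab, hψ⟩
      rw [realize_witnessFormula] at hψ
      exact hψ ⟨a, fun i => hab i⟩
    · intro f hf
      rw [realize_witnessFormula]
      exact hk f hf
  · rintro ⟨k, ψ, hw, bs, hbs, hψ⟩
    refine ⟨k, bs, hbs, fun f hf => ?_⟩
    rintro ⟨a, ha⟩
    exact hw ⟨a, fun i => bs (f i), ha, hψ f hf⟩
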